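/- arXiv:math/0109190 — 3 statements merged into one kernel-verified Lean document; each statement's English description precedes it below -/
import Mathlib

section
/- For every integer n ≥ 1 and every finite set K₀ of reals contained in [0,n), there exists C₃ > 0 such that for all p ∈ ℕ and all r ∈ K₀: (Γ(p+n+1)/Γ(p+r+1))^{r/(n−r)} ≤ C₃ · Γ(p+r+1)/Γ(p+1). -/
open MeasureTheory Real
open scoped BigOperators ENNReal NNReal

namespace MQEpaper

/-- Points of ℝⁿ. -/
abbrev Pt (n : ℕ) := Fin n → ℝ

/-- Multi-indices. -/
abbrev MIdx (n : ℕ) := Fin n → ℕ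

/-- Partial derivative in the `j`-th coordinate direction. -/
noncomputable def pd {n : ℕ} (j : Fin n) (u : Pt n → ℂ) : Pt n → ℂ :=
  fun x => fderiv ℝ u x (Pi.single j 1)

/-- Iterated partial derivative `∂^α`. -/
noncomputable def pdM {n : ℕ} (α : MIdx n) (u : Pt n → ℂ) : Pt n → ℂ :=
  (List.finRange n).foldr (fun j v => (pd j)^[α j] v) u

/-- Length `|α| = Σ αᵢ` of a multi-index. -/
def msize {n : ℕ} (α : MIdx n) : ℕ := ∑ i, α i

/-- Pairing `⟨α,q⟩ = Σ αᵢ qᵢ` of a multi-index with a weight. -/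
def dotQ {n : ℕ} (α : MIdx n) (q : Pt n) : ℝ := ∑ i, (α i : ℝ) * q i

/-- A multi-index viewed as a point of ℝⁿ. -/
def coeR {n : ℕ} (α : MIdx n) : Pt n := fun i => (α i : ℝ)

/-- The operator `D^α = (-i)^{|α|} ∂^α`. -/
noncomputable def Dop {n : ℕ} (α : MIdx n) (u : Pt n → ℂ) : Pt n → ℂ :=
  fun x => (-Complex.I) ^ msize α * pdM α u x

/-- The differential operator `P(x,D) u = Σ_α a_α(x) D^α u` with coefficient family `a`. -/
noncomputable def Pop {n : ℕ} (a : MIdx n → Pt n → ℂ) (u : Pt n → ℂ) : Pt n → ℂ :=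
  fun x => ∑ᶠ α : MIdx n, a α x * Dop α u x

/-- Iterated application `P_{i₁} ⋯ P_{i_l} u` of the operators of a system along a list. -/
noncomputable def PopList {n N : ℕ} (a : Fin N → MIdx n → Pt n → ℂ) :
    List (Fin N) → (Pt n → ℂ) → Pt n → ℂ
  | [], u => u
  | j :: L, u => Pop (a j) (PopList a L u)

/-- The symbol `P(x,ξ) = Σ_α a_α(x) ξ^α`. -/
noncomputable def symb {n : ℕ} (a : MIdx n → Pt n → ℂ) (x ξ : Pt n) : ℂ :=
  ∑ᶠ α : MIdx n, a α x * ∏ i, (ξ i : ℂ) ^ α i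

/-- The `q`-quasi-homogeneous part `P_q(x,ξ) = Σ_{⟨α,q⟩=1} a_α(x) ξ^α` of the symbol. -/
noncomputable def symbq {n : ℕ} (a : MIdx n → Pt n → ℂ) (q : Pt n) (x ξ : Pt n) : ℂ :=
  ∑ᶠ α ∈ {α : MIdx n | dotQ α q = 1}, a α x * ∏ i, (ξ i : ℂ) ^ α i

/-- The `ξ`-derivative `P^{(α)}(x,ξ) = ∂_ξ^α P(x,ξ)` of the symbol. -/
noncomputable def symbD {n : ℕ} (a : MIdx n → Pt n → ℂ) (α : MIdx n) (x ξ : Pt n) : ℂ :=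
  ∑ᶠ β ∈ {β : MIdx n | ∀ i, α i ≤ β i},
    a β x * (∏ i, ((β i).descFactorial (α i) : ℂ)) * ∏ i, (ξ i : ℂ) ^ (β i - α i)

/-- The Newton polyhedron of the system `a` at the point `x`. -/
def NPoly {n N : ℕ} (a : Fin N → MIdx n → Pt n → ℂ) (x : Pt n) : Set (Pt n) :=
  convexHull ℝ ({0} ∪ {y | ∃ α : MIdx n, (∃ j, a j α x ≠ 0) ∧ y = coeR α})

/-- A polyhedron `F` is regular with associated finite set `Q ⊂ (0,∞)ⁿ`. -/
def IsRegular {n : ℕ} (F : Set (Pt n)) (Q : Finset (Pt n)) : Prop :=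
  Q.Nonempty ∧ (∀ q ∈ Q, ∀ i, 0 < q i) ∧
    F = ⋂ q ∈ Q, {y : Pt n | (∀ i, 0 ≤ y i) ∧ ∑ i, y i * q i ≤ 1}

/-- `V(ξ) = Σ_{α ∈ S(F)} |ξ^α|`, the sum over the (integer) vertices of `F`. -/
noncomputable def Vfun {n : ℕ} (F : Set (Pt n)) (ξ : Pt n) : ℝ :=
  ∑ᶠ α ∈ {α : MIdx n | coeR α ∈ F.extremePoints ℝ}, |∏ i, ξ i ^ α i|

/-- `k(y,F) = inf {t > 0 : y/t ∈ F}`. -/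
noncomputable def kF {n : ℕ} (F : Set (Pt n)) (y : Pt n) : ℝ :=
  sInf {t : ℝ | 0 < t ∧ (fun i => y i / t) ∈ F}

/-- `μ_j = max_{q ∈ Q} q_j⁻¹`. -/
noncomputable def muj {n : ℕ} (Q : Finset (Pt n)) (j : Fin n) : ℝ :=
  sSup ((fun q : Pt n => (q j)⁻¹) '' ↑Q)

/-- `μ = max_j μ_j`. -/
noncomputable def muQ {n : ℕ} (Q : Finset (Pt n)) : ℝ :=
  sSup (Set.range (muj Q))

/-- The weight `θ = (μ/μ₁, …, μ/μₙ)`. -/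
noncomputable def theta {n : ℕ} (Q : Finset (Pt n)) : Pt n :=
  fun j => muQ Q / muj Q j

/-- The system `a` is multi-quasi-elliptic in `Ω` with Newton polyhedron `F`
(regular with associated set `Q`). -/
def IsMQE {n N : ℕ} (a : Fin N → MIdx n → Pt n → ℂ) (Ω F : Set (Pt n))
    (Q : Finset (Pt n)) : Prop :=
  (∀ x ∈ Ω, NPoly a x = F) ∧ IsRegular F Q ∧
    ∀ x ∈ Ω, ∃ C > (0:ℝ), ∃ R ≥ (0:ℝ), ∀ ξ : Pt n, R ≤ ‖ξ‖ →
      Vfun F ξ ≤ C * ∑ j, ‖symb (a j) x ξ‖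

/-- The generalized Gevrey class `G^{F,s}(Ω)` attached to a regular polyhedron `F`
(with associated set `Q`). -/
def GClassF {n : ℕ} (Ω F : Set (Pt n)) (Q : Finset (Pt n)) (s : ℝ) (u : Pt n → ℂ) : Prop :=
  ContDiffOn ℝ (⊤ : ℕ∞) u Ω ∧
    ∀ H : Set (Pt n), H ⊆ Ω → IsCompact H → ∃ C > (0:ℝ), ∀ α : MIdx n, ∀ x ∈ H,
      ‖pdM α u x‖ ≤ C ^ (msize α + 1) * Real.Gamma (muQ Q * kF F (coeR α) + 1) ^ s

/-- The anisotropic Gevrey class `G^{w,s}(Ω)` attached to a weight `w ∈ (0,∞)ⁿ`. -/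
def GClassW {n : ℕ} (Ω : Set (Pt n)) (w : Pt n) (s : ℝ) (u : Pt n → ℂ) : Prop :=
  ContDiffOn ℝ (⊤ : ℕ∞) u Ω ∧
    ∀ H : Set (Pt n), H ⊆ Ω → IsCompact H → ∃ C > (0:ℝ), ∀ β : MIdx n, ∀ x ∈ H,
      ‖pdM β u x‖ ≤ C ^ (msize β + 1) * Real.Gamma (dotQ β w + 1) ^ s

/-- The `L²` norm of `v` on a set `ω`. -/
noncomputable def L2 {n : ℕ} (v : Pt n → ℂ) (ω : Set (Pt n)) : ℝ :=
  (eLpNorm v 2 (volume.restrict ω)).toReal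

/-- The space `G^s(Ω,(P_j))` of Gevrey vectors of the system. -/
def GIter {n N : ℕ} (Ω : Set (Pt n)) (a : Fin N → MIdx n → Pt n → ℂ)
    (Q : Finset (Pt n)) (s : ℝ) (u : Pt n → ℂ) : Prop :=
  ContDiffOn ℝ (⊤ : ℕ∞) u Ω ∧
    ∀ H : Set (Pt n), H ⊆ Ω → IsCompact H → ∃ C > (0:ℝ), ∀ L : List (Fin N),
      L2 (PopList a L u) H ≤ C ^ (L.length + 1) * (L.length.factorial : ℝ) ^ (s * muQ Q)

/-- The seminorm `|u|_{k,ω} = Σ_{k(α,F)=k} ‖∂^α u‖_{L²(ω)}` (equal to `‖u‖_{L²(ω)}`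
for `k ≤ 0`). -/
noncomputable def semiN {n : ℕ} (F : Set (Pt n)) (k : ℝ) (u : Pt n → ℂ)
    (ω : Set (Pt n)) : ℝ :=
  if k ≤ 0 then L2 u ω
  else ∑ᶠ α ∈ {α : MIdx n | kF F (coeR α) = k}, L2 (pdM α u) ω

/-- The anisotropic ball `B_ρ = {x : Σ_j |x_j|^{2μ_j/μ} < ρ²}`. -/
noncomputable def Bball {n : ℕ} (Q : Finset (Pt n)) (ρ : ℝ) : Set (Pt n) :=
  {x | ∑ j, |x j| ^ (2 * muj Q j / muQ Q) < ρ ^ 2}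

/-- `σ_p(u,λ,R) = (p!)^{-sμ} λ^{-p} sup_{R/2 ≤ ρ < R} (R-ρ)^{pμ} |u|_{p,B_ρ}`. -/
noncomputable def sigmaP {n : ℕ} (F : Set (Pt n)) (Q : Finset (Pt n)) (s : ℝ)
    (u : Pt n → ℂ) (lam R : ℝ) (p : ℕ) : ℝ :=
  (p.factorial : ℝ) ^ (-(s * muQ Q)) * lam ^ (-(p : ℝ)) *
    sSup ((fun ρ => (R - ρ) ^ ((p : ℝ) * muQ Q) * semiN F (p : ℝ) u (Bball Q ρ)) ''
      Set.Ico (R / 2) R)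

/-- `v(n)`, the number of elements of `K ∩ [0,n)` where `K = {k(α,F) : α ∈ ℕⁿ}`. -/
noncomputable def vK {n : ℕ} (F : Set (Pt n)) : ℕ :=
  Set.ncard {k : ℝ | (∃ α : MIdx n, kF F (coeR α) = k) ∧ 0 ≤ k ∧ k < (n : ℝ)}

/-- The functions `A_{(i₁,…,i_k)}(x,r)` from the proof of the necessity part:
`A_{()}(x,r) = φ(r^{εq}(x-x₀))` and
`A_{(i₁,…,i_{k+1})} = Σ_{⟨α,q⟩≤1} (1/α!) P_{i_{k+1}}^{(α)}(x,r^qξ₀) D_x^α A_{(i₁,…,i_k)}`.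
The list argument is `[i_{k+1}, …, i₁]` (most recently applied operator first). -/
noncomputable def Aseq {n N : ℕ} (a : Fin N → MIdx n → Pt n → ℂ) (q ξ₀ x₀ : Pt n)
    (ε : ℝ) (φ : Pt n → ℂ) : List (Fin N) → ℝ → Pt n → ℂ
  | [], r => fun x => φ fun i => r ^ (ε * q i) * (x i - x₀ i)
  | j :: L, r => fun x =>
      ∑ᶠ α ∈ {α : MIdx n | dotQ α q ≤ 1},
        (∏ i, ((α i).factorial : ℂ))⁻¹ *
          symbD (a j) α x (fun i => r ^ q i * ξ₀ i) *
          Dop α (Aseq a q ξ₀ x₀ ε φ L r) x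


lemma gamma_interp {x y a b : ℝ} (hx : 0 < x) (hy : 0 < y) (ha : 0 ≤ a) (hb : 0 ≤ b)
    (hab : a + b = 1) : Real.Gamma (a * x + b * y) ≤ Real.Gamma x ^ a * Real.Gamma y ^ b := by
  have hpt : 0 < a * x + b * y := by
    rcases eq_or_lt_of_le ha with h | h
    · have : b = 1 := by linarith
      simp [← h, this, hy]
    · nlinarith [mul_nonneg hb hy.le]
  have h := Real.convexOn_log_Gamma.2 (Set.mem_Ioi.mpr hx) (Set.mem_Ioi.mpr hy) ha hb hab
  simp only [Function.comp_apply, smul_eq_mul] at h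
  have h1 : Real.Gamma (a * x + b * y) = Real.exp (Real.log (Real.Gamma (a * x + b * y))) :=
    (Real.exp_log (Real.Gamma_pos_of_pos hpt)).symm
  rw [h1]
  calc Real.exp (Real.log (Real.Gamma (a * x + b * y)))
      ≤ Real.exp (a * Real.log (Real.Gamma x) + b * Real.log (Real.Gamma y)) :=
        Real.exp_le_exp.mpr h
    _ = Real.Gamma x ^ a * Real.Gamma y ^ b := by
        rw [Real.exp_add, Real.rpow_def_of_pos (Real.Gamma_pos_of_pos hx),
          Real.rpow_def_of_pos (Real.Gamma_pos_of_pos hy), mul_comm a, mul_comm b]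

/-- Upper Gautschi on [0,1]: Γ(x+s) ≤ Γ(x) x^s for 0<x, 0≤s≤1. -/
lemma gautschi_upper_base {x s : ℝ} (hx : 0 < x) (hs0 : 0 ≤ s) (hs1 : s ≤ 1) :
    Real.Gamma (x + s) ≤ Real.Gamma x * x ^ s := by
  have key := gamma_interp hx (by linarith : (0:ℝ) < x + 1) (by linarith : 0 ≤ 1 - s) hs0
      (by ring)
  have harg : (1 - s) * x + s * (x + 1) = x + s := by ring
  rw [harg, Real.Gamma_add_one hx.ne'] at key
  calc Real.Gamma (x + s) ≤ Real.Gamma x ^ (1 - s) * (x * Real.Gamma x) ^ s := key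
    _ = Real.Gamma x * x ^ s := by
        rw [Real.mul_rpow hx.le (Real.Gamma_pos_of_pos hx).le,
          mul_comm (x ^ s), ← mul_assoc, ← Real.rpow_add (Real.Gamma_pos_of_pos hx)]
        norm_num

/-- Lower Gautschi on [0,1]: Γ(x)·(x+s-1)^s ≤ Γ(x+s) for x ≥ 2 wait x+s-1>0. -/
lemma gautschi_lower_base {x s : ℝ} (hx : 0 < x + s - 1) (hx0 : 0 < x) (hs0 : 0 ≤ s)
    (hs1 : s ≤ 1) : Real.Gamma x * (x + s - 1) ^ s ≤ Real.Gamma (x + s) := by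
  have hxs : 0 < x + s := by linarith
  have key := gamma_interp hx hxs hs0 (by linarith : 0 ≤ 1 - s) (by ring)
  have harg : s * (x + s - 1) + (1 - s) * (x + s) = x := by ring
  have hG1 : Real.Gamma (x + s) = (x + s - 1) * Real.Gamma (x + s - 1) := by
    have := Real.Gamma_add_one hx.ne'
    rw [show x + s - 1 + 1 = x + s by ring] at this
    exact this
  rw [harg] at key
  have hGs : Real.Gamma (x + s - 1) = Real.Gamma (x + s) / (x + s - 1) := by
    rw [hG1]; field_simp
  have hBpos : 0 < (x + s - 1) ^ s := Real.rpow_pos_of_pos hx s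
  have hGpos : 0 < Real.Gamma (x + s) := Real.Gamma_pos_of_pos hxs
  have key2 : Real.Gamma x ≤ Real.Gamma (x + s) / (x + s - 1) ^ s := by
    calc Real.Gamma x ≤ Real.Gamma (x + s - 1) ^ s * Real.Gamma (x + s) ^ (1 - s) := key
      _ = Real.Gamma (x + s) / (x + s - 1) ^ s := by
          rw [hGs, Real.div_rpow hGpos.le hx.le, div_mul_eq_mul_div,
            ← Real.rpow_add hGpos]
          norm_num
  exact (le_div_iff₀ hBpos).mp key2

/-- Upper: Γ(x+s) ≤ Γ(x)·(x+s)^s for x ≥ 1, s ≥ 0. -/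
lemma gautschi_upper (x s : ℝ) (hx : 1 ≤ x) (hs : 0 ≤ s) :
    Real.Gamma (x + s) ≤ Real.Gamma x * (x + s) ^ s := by
  have hx0 : (0:ℝ) < x := by linarith
  obtain ⟨k, hk⟩ : ∃ k : ℕ, s ≤ k := exists_nat_ge s
  induction k generalizing s with
  | zero =>
      have : s = 0 := le_antisymm (by exact_mod_cast hk) hs
      simp [this]
  | succ k ih =>
      rcases le_or_gt s 1 with h1 | h1
      · calc Real.Gamma (x + s) ≤ Real.Gamma x * x ^ s := gautschi_upper_base hx0 hs h1
          _ ≤ Real.Gamma x * (x + s) ^ s :=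
            mul_le_mul_of_nonneg_left
              (Real.rpow_le_rpow hx0.le (by linarith) hs) (Real.Gamma_pos_of_pos hx0).le
      · have hs1 : 0 ≤ s - 1 := by linarith
        have hk1 : s - 1 ≤ k := by
          have : (k:ℝ) + 1 = ((k+1 : ℕ) : ℝ) := by push_cast; ring
          linarith [hk]
        have ih1 := ih (s - 1) hs1 hk1
        have hpos : 0 < x + s - 1 := by linarith
        have hG : Real.Gamma (x + s) = (x + s - 1) * Real.Gamma (x + s - 1) := by
          have := Real.Gamma_add_one hpos.ne'
          rw [show x + s - 1 + 1 = x + s by ring] at this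
          exact this
        rw [show x + (s - 1) = x + s - 1 by ring] at ih1
        calc Real.Gamma (x + s) = (x + s - 1) * Real.Gamma (x + s - 1) := hG
          _ ≤ (x + s - 1) * (Real.Gamma x * (x + s - 1) ^ (s - 1)) :=
              mul_le_mul_of_nonneg_left ih1 hpos.le
          _ = Real.Gamma x * (x + s - 1) ^ s := by
              rw [mul_comm (x + s - 1), mul_assoc, ← Real.rpow_add_one hpos.ne']
              ring_nf
          _ ≤ Real.Gamma x * (x + s) ^ s :=
              mul_le_mul_of_nonneg_left
                (Real.rpow_le_rpow hpos.le (by linarith) hs) (Real.Gamma_pos_of_pos hx0).le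

/-- Lower: Γ(x)·(x-1)^s ≤ Γ(x+s) for x ≥ 2, s ≥ 0. -/
lemma gautschi_lower (x s : ℝ) (hx : 2 ≤ x) (hs : 0 ≤ s) :
    Real.Gamma x * (x - 1) ^ s ≤ Real.Gamma (x + s) := by
  have hx0 : (0:ℝ) < x := by linarith
  have hx1 : (0:ℝ) < x - 1 := by linarith
  obtain ⟨k, hk⟩ : ∃ k : ℕ, s ≤ k := exists_nat_ge s
  induction k generalizing s with
  | zero =>
      have : s = 0 := le_antisymm (by exact_mod_cast hk) hs
      simp [this]
  | succ k ih =>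
      rcases le_or_gt s 1 with h1 | h1
      · calc Real.Gamma x * (x - 1) ^ s
            ≤ Real.Gamma x * (x + s - 1) ^ s :=
              mul_le_mul_of_nonneg_left
                (Real.rpow_le_rpow hx1.le (by linarith) hs) (Real.Gamma_pos_of_pos hx0).le
          _ ≤ Real.Gamma (x + s) := gautschi_lower_base (by linarith) hx0 hs h1
      · have hs1 : 0 ≤ s - 1 := by linarith
        have hk1 : s - 1 ≤ k := by
          have : (k:ℝ) + 1 = ((k+1 : ℕ) : ℝ) := by push_cast; ring
          linarith [hk]
        have ih1 := ih (s - 1) hs1 hk1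
        have hpos : 0 < x + s - 1 := by linarith
        have hG : Real.Gamma (x + s) = (x + s - 1) * Real.Gamma (x + s - 1) := by
          have := Real.Gamma_add_one hpos.ne'
          rw [show x + s - 1 + 1 = x + s by ring] at this
          exact this
        rw [show x + (s - 1) = x + s - 1 by ring] at ih1
        calc Real.Gamma x * (x - 1) ^ s
            = (x - 1) * (Real.Gamma x * (x - 1) ^ (s - 1)) := by
              rw [mul_comm (x-1), mul_assoc, ← Real.rpow_add_one hx1.ne']
              ring_nf
          _ ≤ (x + s - 1) * (Real.Gamma x * (x - 1) ^ (s - 1)) := by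
              apply mul_le_mul_of_nonneg_right (by linarith)
              positivity
          _ ≤ (x + s - 1) * Real.Gamma (x + s - 1) :=
              mul_le_mul_of_nonneg_left ih1 hpos.le
          _ = Real.Gamma (x + s) := hG.symm

lemma per_r (n : ℕ) (hn : 1 ≤ n) (r : ℝ) (hr0 : 0 ≤ r) (hrn : r < n) :
    ∃ C > (0:ℝ), ∀ p : ℕ,
      (Real.Gamma ((p : ℝ) + n + 1) / Real.Gamma ((p : ℝ) + r + 1)) ^ (r / ((n : ℝ) - r)) ≤
        C * (Real.Gamma ((p : ℝ) + r + 1) / Real.Gamma ((p : ℝ) + 1)) := by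
  have hnr : (0:ℝ) < (n:ℝ) - r := by linarith
  set L0 : ℝ := (Real.Gamma ((0:ℝ) + n + 1) / Real.Gamma ((0:ℝ) + r + 1)) ^ (r / ((n : ℝ) - r))
    with hL0
  set b0 : ℝ := Real.Gamma ((0:ℝ) + r + 1) / Real.Gamma ((0:ℝ) + 1) with hb0
  have hb0pos : 0 < b0 := by
    apply div_pos (Real.Gamma_pos_of_pos (by linarith)) (Real.Gamma_pos_of_pos (by norm_num))
  have hL0nn : 0 ≤ L0 := by
    apply Real.rpow_nonneg
    positivity
  refine ⟨((n:ℝ) + 2) ^ (n:ℝ) + L0 / b0, by positivity, ?_⟩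
  intro p
  have hbpos : 0 < Real.Gamma ((p:ℝ) + r + 1) / Real.Gamma ((p:ℝ) + 1) := by
    apply div_pos (Real.Gamma_pos_of_pos (by positivity)) (Real.Gamma_pos_of_pos (by positivity))
  rcases Nat.eq_zero_or_pos p with rfl | hp
  · push_cast
    have : L0 = L0 / b0 * b0 := by field_simp
    calc (Real.Gamma ((0:ℝ) + n + 1) / Real.Gamma ((0:ℝ) + r + 1)) ^ (r / ((n : ℝ) - r))
        = L0 / b0 * b0 := by rw [← this]
      _ ≤ (((n:ℝ) + 2) ^ (n:ℝ) + L0 / b0) * b0 := by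
          apply mul_le_mul_of_nonneg_right _ hb0pos.le
          have : (0:ℝ) ≤ ((n:ℝ) + 2) ^ (n:ℝ) := by positivity
          linarith
      _ = (((n:ℝ) + 2) ^ (n:ℝ) + L0 / b0) * (Real.Gamma ((0:ℝ) + r + 1) / Real.Gamma ((0:ℝ) + 1)) := rfl
  · -- p ≥ 1
    have hp1 : (1:ℝ) ≤ (p:ℝ) := by exact_mod_cast hp
    have hGrpos : 0 < Real.Gamma ((p:ℝ) + r + 1) := Real.Gamma_pos_of_pos (by positivity)
    -- upper bound on a
    have hup : Real.Gamma ((p:ℝ) + n + 1) ≤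
        Real.Gamma ((p:ℝ) + r + 1) * ((p:ℝ) + n + 1) ^ ((n:ℝ) - r) := by
      have := gautschi_upper ((p:ℝ) + r + 1) ((n:ℝ) - r) (by linarith) hnr.le
      rw [show (p:ℝ) + r + 1 + ((n:ℝ) - r) = (p:ℝ) + n + 1 by ring] at this
      exact this
    have ha : Real.Gamma ((p : ℝ) + n + 1) / Real.Gamma ((p : ℝ) + r + 1)
        ≤ ((p:ℝ) + n + 1) ^ ((n:ℝ) - r) := by
      rw [div_le_iff₀ hGrpos]
      linarith [hup]
    have hann : 0 ≤ Real.Gamma ((p : ℝ) + n + 1) / Real.Gamma ((p : ℝ) + r + 1) := by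
      positivity
    have hstep2 : (Real.Gamma ((p : ℝ) + n + 1) / Real.Gamma ((p : ℝ) + r + 1)) ^ (r / ((n:ℝ) - r))
        ≤ ((p:ℝ) + n + 1) ^ r := by
      calc (Real.Gamma ((p : ℝ) + n + 1) / Real.Gamma ((p : ℝ) + r + 1)) ^ (r / ((n:ℝ) - r))
          ≤ (((p:ℝ) + n + 1) ^ ((n:ℝ) - r)) ^ (r / ((n:ℝ) - r)) :=
            Real.rpow_le_rpow hann ha (by positivity)
        _ = ((p:ℝ) + n + 1) ^ r := by
            rw [← Real.rpow_mul (by positivity)]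
            congr 1
            field_simp
    -- lower bound on b
    have hlow : Real.Gamma ((p:ℝ) + 1) * (p:ℝ) ^ r ≤ Real.Gamma ((p:ℝ) + r + 1) := by
      have := gautschi_lower ((p:ℝ) + 1) r (by linarith) hr0
      rw [show (p:ℝ) + 1 + r = (p:ℝ) + r + 1 by ring,
        show (p:ℝ) + 1 - 1 = (p:ℝ) by ring] at this
      exact this
    have hb : (p:ℝ) ^ r ≤ Real.Gamma ((p:ℝ) + r + 1) / Real.Gamma ((p:ℝ) + 1) := by
      rw [le_div_iff₀ (Real.Gamma_pos_of_pos (by positivity : (0:ℝ) < (p:ℝ) + 1))]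
      linarith [hlow]
    -- combine
    have hppos : (0:ℝ) < (p:ℝ) := by linarith
    have hstep4 : ((p:ℝ) + n + 1) ^ r ≤ ((n:ℝ) + 2) ^ r * (p:ℝ) ^ r := by
      rw [← Real.mul_rpow (by positivity) hppos.le]
      apply Real.rpow_le_rpow (by positivity) _ hr0
      nlinarith
    have hstep5 : ((n:ℝ) + 2) ^ r ≤ ((n:ℝ) + 2) ^ (n:ℝ) :=
      Real.rpow_le_rpow_of_exponent_le (by have := Nat.cast_nonneg (α := ℝ) n; linarith) hrn.le
    have hLb := hL0nn
    calc (Real.Gamma ((p : ℝ) + n + 1) / Real.Gamma ((p : ℝ) + r + 1)) ^ (r / ((n:ℝ) - r))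
        ≤ ((p:ℝ) + n + 1) ^ r := hstep2
      _ ≤ ((n:ℝ) + 2) ^ r * (p:ℝ) ^ r := hstep4
      _ ≤ ((n:ℝ) + 2) ^ (n:ℝ) * (Real.Gamma ((p:ℝ) + r + 1) / Real.Gamma ((p:ℝ) + 1)) := by
          apply mul_le_mul hstep5 hb (by positivity) (by positivity)
      _ ≤ (((n:ℝ) + 2) ^ (n:ℝ) + L0 / b0) * (Real.Gamma ((p:ℝ) + r + 1) / Real.Gamma ((p:ℝ) + 1)) := by
          apply mul_le_mul_of_nonneg_right _ hbpos.le
          have : 0 ≤ L0 / b0 := div_nonneg hL0nn hb0pos.le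
          linarith

/-- the Gamma-function interpolation constant used in the proof of
Theorem 2: `(Γ(p+n+1)/Γ(p+r+1))^{r/(n-r)} ≤ C₃ Γ(p+r+1)/Γ(p+1)` uniformly in `p ∈ ℕ`
and `r` in a finite subset of `[0,n)`. -/
theorem statement_12 (n : ℕ) (hn : 1 ≤ n) (K₀ : Finset ℝ)
    (hK : ∀ r ∈ K₀, 0 ≤ r ∧ r < (n : ℝ)) :
    ∃ C₃ > (0:ℝ), ∀ p : ℕ, ∀ r ∈ K₀,
      (Real.Gamma ((p : ℝ) + n + 1) / Real.Gamma ((p : ℝ) + r + 1)) ^ (r / ((n : ℝ) - r)) ≤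
        C₃ * (Real.Gamma ((p : ℝ) + r + 1) / Real.Gamma ((p : ℝ) + 1)) := by
  classical
  revert hK
  induction K₀ using Finset.induction_on with
  | empty =>
      intro _
      exact ⟨1, one_pos, fun p r hr => absurd hr (by simp)⟩
  | @insert a s ha ih =>
      intro hK
      obtain ⟨C₁, hC₁, h₁⟩ := ih (fun r hr => hK r (Finset.mem_insert_of_mem hr))
      obtain ⟨C₂, hC₂, h₂⟩ := per_r n hn a (hK a (Finset.mem_insert_self a s)).1
        (hK a (Finset.mem_insert_self a s)).2
      refine ⟨max C₁ C₂, lt_max_of_lt_left hC₁, ?_⟩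
      intro p r hr
      have hbpos : 0 < Real.Gamma ((p:ℝ) + r + 1) / Real.Gamma ((p:ℝ) + 1) := by
        have h0r : 0 ≤ r := (hK r hr).1
        exact div_pos (Real.Gamma_pos_of_pos (by positivity))
          (Real.Gamma_pos_of_pos (by positivity))
      rcases Finset.mem_insert.mp hr with rfl | hr'
      · exact (h₂ p).trans (mul_le_mul_of_nonneg_right (le_max_right _ _) hbpos.le)
      · exact (h₁ p r hr').trans (mul_le_mul_of_nonneg_right (le_max_left _ _) hbpos.le)


end MQEpaper
end

section
/- For all ω > 0, all σ ≥ 1, all λ > 0, all τ > 0 and all reals a, b, c with a ≥ ω, b ≥ ω, c ≥ ω: λ^a Γ(b+c+1)^σ τ^c ≤ 2^{σ/ω} ( λ^{a+c} Γ(b+1)^σ + Γ(a+b+c+1)^σ τ^{a+c} ). -/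
/-!
By log-convexity of `Γ`, with `t = a / (a + c)` we have
`Γ(b + c + 1) ≤ Γ(b + 1) ^ t * Γ(a + b + c + 1) ^ (1 - t)`. With this weight the left-hand side
is at most `X ^ t * Y ^ (1 - t)`, where `X` and `Y` are the two terms on the right-hand side, and
weighted AM-GM bounds this by `X + Y ≤ 2 ^ (σ / ω) * (X + Y)`.
-/

open MeasureTheory Real
open scoped BigOperators ENNReal NNReal

namespace MQEpaper

lemma Gamma_add_le_rpow_Gamma_mul_rpow_Gamma {x a c : ℝ} (hx : 0 < x) (ha : 0 < a)
    (hc : 0 < c) :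
    Gamma (x + c) ≤ Gamma x ^ (a / (a + c)) * Gamma (x + (a + c)) ^ (c / (a + c)) := by
  have hac : 0 < a + c := by linarith
  have hx_c : a / (a + c) * x + c / (a + c) * (x + (a + c)) = x + c := by
    field_simp
    ring
  rw [← hx_c]
  exact Gamma_mul_add_mul_le_rpow_Gamma_mul_rpow_Gamma hx (by positivity) (by positivity)
    (by positivity) (by field_simp)

lemma rpow_mul_rpow_le_add {X Y t s : ℝ} (hX : 0 ≤ X) (hY : 0 ≤ Y) (ht : 0 ≤ t)
    (hs : 0 ≤ s) (hts : t + s = 1) : X ^ t * Y ^ s ≤ X + Y :=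
  calc X ^ t * Y ^ s ≤ t * X + s * Y := geom_mean_le_arith_mean2_weighted ht hs hX hY hts
    _ ≤ X + Y := by nlinarith

lemma rpow_mul_Gamma_rpow_mul_rpow_le {lam τ a b c σ : ℝ} (hlam : 0 < lam) (hτ : 0 < τ)
    (ha : 0 < a) (hb : -1 < b) (hc : 0 < c) (hσ : 0 ≤ σ) :
    lam ^ a * Gamma (b + c + 1) ^ σ * τ ^ c ≤
      lam ^ (a + c) * Gamma (b + 1) ^ σ + Gamma (a + b + c + 1) ^ σ * τ ^ (a + c) := by
  have hac : 0 < a + c := by linarith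
  set t := a / (a + c) with ht
  set s := c / (a + c) with hs
  have hts : t + s = 1 := by rw [ht, hs]; field_simp
  have hΓ₀ : 0 < Gamma (b + 1) := Gamma_pos_of_pos (by linarith)
  have hΓ₁ : 0 < Gamma (a + b + c + 1) := Gamma_pos_of_pos (by linarith)
  have hΓ : Gamma (b + c + 1) ≤ Gamma (b + 1) ^ t * Gamma (a + b + c + 1) ^ s := by
    rw [show b + c + 1 = b + 1 + c by ring, show a + b + c + 1 = b + 1 + (a + c) by ring]
    exact Gamma_add_le_rpow_Gamma_mul_rpow_Gamma (by linarith) ha hc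
  have hlam_t : lam ^ a = (lam ^ (a + c)) ^ t := by
    rw [← rpow_mul hlam.le, ht]; field_simp
  have hτ_s : τ ^ c = (τ ^ (a + c)) ^ s := by
    rw [← rpow_mul hτ.le, hs]; field_simp
  calc lam ^ a * Gamma (b + c + 1) ^ σ * τ ^ c
      ≤ lam ^ a * (Gamma (b + 1) ^ t * Gamma (a + b + c + 1) ^ s) ^ σ * τ ^ c := by
        have := (Gamma_pos_of_pos (show 0 < b + c + 1 by linarith)).le
        gcongr
    _ = (lam ^ (a + c) * Gamma (b + 1) ^ σ) ^ t *
          (Gamma (a + b + c + 1) ^ σ * τ ^ (a + c)) ^ s := by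
        rw [hlam_t, hτ_s, mul_rpow (by positivity) (by positivity),
          mul_rpow (by positivity) (by positivity), mul_rpow (by positivity) (by positivity),
          ← rpow_mul hΓ₀.le, ← rpow_mul hΓ₁.le, ← rpow_mul hΓ₀.le, ← rpow_mul hΓ₁.le,
          mul_comm t σ, mul_comm s σ]
        ring
    _ ≤ _ := rpow_mul_rpow_le_add (by positivity) (by positivity) (by positivity)
        (by positivity) hts

/-- inequality (3.7) of the paper: for `ω > 0`, `σ ≥ 1`, `λ,τ > 0` and
`a,b,c ≥ ω`, `λ^a Γ(b+c+1)^σ τ^c ≤ 2^{σ/ω} (λ^{a+c} Γ(b+1)^σ + Γ(a+b+c+1)^σ τ^{a+c})`. -/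
theorem statement_14 (ω σ lam τ a b c : ℝ) (hω : 0 < ω) (hσ : 1 ≤ σ)
    (hlam : 0 < lam) (hτ : 0 < τ) (ha : ω ≤ a) (hb : ω ≤ b) (hc : ω ≤ c) :
    lam ^ a * Real.Gamma (b + c + 1) ^ σ * τ ^ c ≤
      2 ^ (σ / ω) * (lam ^ (a + c) * Real.Gamma (b + 1) ^ σ +
        Real.Gamma (a + b + c + 1) ^ σ * τ ^ (a + c)) := by
  have h_one_le : (1 : ℝ) ≤ 2 ^ (σ / ω) := one_le_rpow one_le_two (by positivity)
  have hΓ₀ : 0 < Gamma (b + 1) := Gamma_pos_of_pos (by linarith)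
  have hΓ₁ : 0 < Gamma (a + b + c + 1) := Gamma_pos_of_pos (by linarith)
  calc lam ^ a * Gamma (b + c + 1) ^ σ * τ ^ c
      ≤ lam ^ (a + c) * Gamma (b + 1) ^ σ + Gamma (a + b + c + 1) ^ σ * τ ^ (a + c) :=
        rpow_mul_Gamma_rpow_mul_rpow_le hlam hτ (by linarith) (by linarith) (by linarith)
          (by linarith)
    _ ≤ _ := le_mul_of_one_le_left (by positivity) h_one_le

end MQEpaper
end

section
/- Let x₀ ∈ Ω, q ∈ (0,∞)ⁿ and μ > 0, and assume a_{jα} ≡ 0 on Ω whenever ⟨α,q⟩ > 1. Let ξ₀ ∈ ℝⁿ with |ξ₀| = 1 satisfy P_{jq}(x₀,ξ₀) = 0 for all j = 1,…,N, and let ε > 0 satisfy ε ≤ μ(1−⟨β,q⟩) for every β with ⟨β,q⟩ < 1 and a_{jβ} not identically zero for some j. Then for every δ > 0 such that the closed ball of center x₀ and radius 2δ is contained in Ω, there exists C₁ > 0 such that for all r ≥ 1, all j = 1,…,N and all x ∈ Ω with |x−x₀| < 2δ r^{−ε/μ}: |P_j(x, r^q ξ₀)| ≤ C₁ r^{1−ε/μ}.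 -/
open MeasureTheory Real
open scoped BigOperators ENNReal NNReal

namespace MQEpaper

/-!
Expand `P(x, r^q ξ₀) = Σ_α r^{⟨α,q⟩} a_α(x) ξ₀^α`. The terms with `⟨α,q⟩ = 1` add up to
`r P_q(x, ξ₀)`; since `P_q(x₀, ξ₀) = 0` and `P_q(·, ξ₀)` is Lipschitz on the compact convex ball,
this is at most `r · L |x - x₀| ≤ 2δL r^{1-ε/μ}`. Every other nonzero term has
`⟨α,q⟩ ≤ 1 - ε/μ`, so it is at most `r^{1-ε/μ}` times a coefficient bounded on the ball.
-/

theorem norm_sum_rpow_mul_le {ι : Type*} (s : Finset ι) (c : ι → ℂ) (d : ι → ℝ) {r t : ℝ}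
    (hr : 1 ≤ r) (hd : ∀ i ∈ s, c i ≠ 0 → d i ≤ t) :
    ‖∑ i ∈ s, ((r ^ d i : ℝ) : ℂ) * c i‖ ≤ r ^ t * ∑ i ∈ s, ‖c i‖ := by
  rw [Finset.mul_sum]
  refine (norm_sum_le _ _).trans (Finset.sum_le_sum fun i hi => ?_)
  rw [norm_mul, Complex.norm_real, Real.norm_of_nonneg (by positivity)]
  rcases eq_or_ne (c i) 0 with hc | hc
  · simp [hc]
  · exact mul_le_mul_of_nonneg_right (Real.rpow_le_rpow_of_exponent_le hr (hd i hi hc))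
      (norm_nonneg _)

section Symbol

variable {n : ℕ} {a : MIdx n → Pt n → ℂ}

theorem symb_eq_sum (hfin : {α | a α ≠ 0}.Finite) (x ξ : Pt n) :
    symb a x ξ = ∑ α ∈ hfin.toFinset, a α x * ∏ i, (ξ i : ℂ) ^ α i := by
  refine finsum_eq_sum_of_support_subset _ fun α hα => ?_
  rw [Finset.mem_coe, Set.Finite.mem_toFinset]
  intro h
  simp [h] at hα

theorem symbq_eq_sum (hfin : {α | a α ≠ 0}.Finite) (q x ξ : Pt n) :
    symbq a q x ξ =
      ∑ α ∈ hfin.toFinset with dotQ α q = 1, a α x * ∏ i, (ξ i : ℂ) ^ α i := by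
  refine finsum_mem_eq_sum_of_inter_support_eq _ ?_
  ext α
  simp only [Set.mem_inter_iff, Function.mem_support, Set.mem_ofPred_eq, Finset.coe_filter,
    Set.Finite.mem_toFinset]
  exact ⟨fun ⟨hq, hα⟩ => ⟨⟨fun h => hα (by simp [h]), hq⟩, hα⟩, fun ⟨⟨_, hq⟩, hα⟩ => ⟨hq, hα⟩⟩

theorem contDiffOn_symbq {s : Set (Pt n)} {k : WithTop ℕ∞} (hfin : {α | a α ≠ 0}.Finite)
    (hcoef : ∀ α, ContDiffOn ℝ k (a α) s) (q ξ : Pt n) :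
    ContDiffOn ℝ k (fun x => symbq a q x ξ) s := by
  simp_rw [symbq_eq_sum hfin]
  exact ContDiffOn.sum fun α _ => (hcoef α).mul contDiffOn_const

theorem prod_scaled_pow {r : ℝ} (hr : 0 < r) (q ξ : Pt n) (α : MIdx n) :
    ∏ i, ((r ^ q i * ξ i : ℝ) : ℂ) ^ α i = ((r ^ dotQ α q : ℝ) : ℂ) * ∏ i, (ξ i : ℂ) ^ α i := by
  rw [dotQ, Real.rpow_sum_of_pos hr, Complex.ofReal_prod, ← Finset.prod_mul_distrib]
  refine Finset.prod_congr rfl fun i _ => ?_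
  rw [Complex.ofReal_mul, mul_pow, ← Complex.ofReal_pow, ← Real.rpow_natCast,
    ← Real.rpow_mul hr.le, mul_comm (q i)]

theorem symb_scaled_eq (hfin : {α | a α ≠ 0}.Finite) {r : ℝ} (hr : 0 < r) (q x ξ : Pt n) :
    symb a x (fun i => r ^ q i * ξ i) =
      r * symbq a q x ξ + ∑ α ∈ hfin.toFinset with dotQ α q ≠ 1,
        ((r ^ dotQ α q : ℝ) : ℂ) * (a α x * ∏ i, (ξ i : ℂ) ^ α i) := by
  have hterm : ∀ α, a α x * ∏ i, ((r ^ q i * ξ i : ℝ) : ℂ) ^ α i =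
      ((r ^ dotQ α q : ℝ) : ℂ) * (a α x * ∏ i, (ξ i : ℂ) ^ α i) := fun α => by
    rw [prod_scaled_pow hr]
    ring
  rw [symb_eq_sum hfin, symbq_eq_sum hfin, Finset.mul_sum,
    Finset.sum_congr rfl fun α _ => hterm α,
    ← Finset.sum_filter_add_sum_filter_not _ (fun α => dotQ α q = 1)]
  congr 1
  refine Finset.sum_congr rfl fun α hα => ?_
  rw [(Finset.mem_filter.1 hα).2, Real.rpow_one]

theorem exists_norm_symb_scaled_le (hfin : {α | a α ≠ 0}.Finite) {x₀ q ξ₀ : Pt n} {κ ρ : ℝ}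
    (hκ : 0 ≤ κ) (hρ : 0 ≤ ρ)
    (hcoef : ∀ α, ContDiffOn ℝ 1 (a α) (Metric.closedBall x₀ ρ))
    (horder : ∀ α, ∀ x ∈ Metric.closedBall x₀ ρ, a α x ≠ 0 →
      dotQ α q = 1 ∨ dotQ α q ≤ 1 - κ)
    (hzero : symbq a q x₀ ξ₀ = 0) :
    ∃ C, ∀ r, 1 ≤ r → ∀ x, dist x x₀ < ρ * r ^ (-κ) →
      ‖symb a x (fun i => r ^ q i * ξ₀ i)‖ ≤ C * r ^ (1 - κ) := by
  set c : MIdx n → Pt n → ℂ := fun α x => a α x * ∏ i, (ξ₀ i : ℂ) ^ α i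
  obtain ⟨L, hL⟩ := (contDiffOn_symbq hfin hcoef q ξ₀).exists_lipschitzOnWith one_ne_zero
    (convex_closedBall x₀ ρ) (isCompact_closedBall x₀ ρ)
  obtain ⟨M, hM⟩ := (isCompact_closedBall x₀ ρ).exists_bound_of_continuousOn
    (f := fun x => ∑ α ∈ hfin.toFinset, ‖c α x‖)
    (continuousOn_finsetSum _ fun α _ => ((hcoef α).continuousOn.mul continuousOn_const).norm)
  refine ⟨ρ * L + M, fun r hr x hx => ?_⟩
  have hr0 : 0 < r := one_pos.trans_le hr
  have hxK : x ∈ Metric.closedBall x₀ ρ := Metric.mem_closedBall.2 <| hx.le.trans <|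
    mul_le_of_le_one_right hρ (Real.rpow_le_one_of_one_le_of_nonpos hr (neg_nonpos.2 hκ))
  have hprincipal : ‖symbq a q x ξ₀‖ ≤ L * (ρ * r ^ (-κ)) := by
    have := hL.dist_le_mul x hxK x₀ (Metric.mem_closedBall_self hρ)
    rw [hzero, dist_zero_right] at this
    exact this.trans (mul_le_mul_of_nonneg_left hx.le L.2)
  have hlower : ‖∑ α ∈ hfin.toFinset with dotQ α q ≠ 1, ((r ^ dotQ α q : ℝ) : ℂ) * c α x‖ ≤
      r ^ (1 - κ) * M := by
    refine (norm_sum_rpow_mul_le _ _ _ hr fun α hα hc => ?_).trans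
      (mul_le_mul_of_nonneg_left ?_ (by positivity))
    · exact (horder α x hxK (left_ne_zero_of_mul hc)).resolve_left (Finset.mem_filter.1 hα).2
    · refine (Finset.sum_le_sum_of_subset_of_nonneg (Finset.filter_subset _ _)
        fun _ _ _ => norm_nonneg _).trans ?_
      exact (Real.le_norm_self _).trans (hM x hxK)
  rw [symb_scaled_eq hfin hr0]
  calc _ ≤ ‖(r : ℂ) * symbq a q x ξ₀‖ + ‖_‖ := norm_add_le _ _
    _ ≤ r * (L * (ρ * r ^ (-κ))) + r ^ (1 - κ) * M := by
      rw [norm_mul, Complex.norm_real, Real.norm_of_nonneg hr0.le]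
      gcongr
    _ = (ρ * L + M) * r ^ (1 - κ) := by
      rw [sub_eq_add_neg, Real.rpow_add hr0, Real.rpow_one]
      ring

end Symbol

theorem statement_15_general {n N : ℕ}
    (Ω : Set (Pt n))
    (a : Fin N → MIdx n → Pt n → ℂ)
    (hfin : ∀ j, {α : MIdx n | a j α ≠ 0}.Finite)
    (hcoef : ∀ j α, ContDiffOn ℝ 1 (a j α) Ω)
    (x₀ : Pt n)
    (q : Pt n) (μ : ℝ) (hμ : 0 < μ)
    (hvan : ∀ j α, 1 < dotQ α q → ∀ x ∈ Ω, a j α x = 0)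
    (ξ₀ : Pt n)
    (hzero : ∀ j, symbq (a j) q x₀ ξ₀ = 0)
    (ε : ℝ) (hε : 0 < ε)
    (hεle : ∀ β : MIdx n, dotQ β q < 1 → (∃ j, ∃ x ∈ Ω, a j β x ≠ 0) →
      ε ≤ μ * (1 - dotQ β q)) :
    ∀ δ : ℝ, 0 < δ → Metric.closedBall x₀ (2 * δ) ⊆ Ω →
      ∃ C₁ > (0:ℝ), ∀ r : ℝ, 1 ≤ r → ∀ j, ∀ x ∈ Ω, dist x x₀ < 2 * δ * r ^ (-ε / μ) →
        ‖symb (a j) x (fun i => r ^ q i * ξ₀ i)‖ ≤ C₁ * r ^ (1 - ε / μ) := by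
  intro δ hδ hball
  have horder : ∀ j α, ∀ x ∈ Metric.closedBall x₀ (2 * δ), a j α x ≠ 0 →
      dotQ α q = 1 ∨ dotQ α q ≤ 1 - ε / μ := by
    intro j α x hx hax
    rcases lt_trichotomy (dotQ α q) 1 with hlt | heq | hgt
    · have := hεle α hlt ⟨j, x, hball hx, hax⟩
      right
      rw [le_sub_comm, div_le_iff₀ hμ]
      linarith
    · exact Or.inl heq
    · exact absurd (hvan j α hgt x (hball hx)) hax
  choose C hC using fun j => exists_norm_symb_scaled_le (hfin j) (div_pos hε hμ).le
    (by positivity) (fun α => (hcoef j α).mono hball) (horder j) (hzero j)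
  obtain ⟨B, hB⟩ := (Set.finite_range C).bddAbove
  refine ⟨max B 1, by positivity, fun r hr j x _ hx => ?_⟩
  calc _ ≤ C j * r ^ (1 - ε / μ) := hC j r hr x (by rwa [← neg_div])
    _ ≤ max B 1 * r ^ (1 - ε / μ) := by
      gcongr
      exact (hB ⟨j, rfl⟩).trans (le_max_left _ _)

/-- inequality (3.3) of the paper: near a common zero `ξ₀` of the
`q`-quasi-homogeneous parts, the symbols satisfy `|P_j(x, r^q ξ₀)| ≤ C₁ r^{1-ε/μ}` for
`|x - x₀| < 2δ r^{-ε/μ}`. -/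
theorem statement_15 {n N : ℕ} (hn : 0 < n) (hN : 0 < N)
    (Ω : Set (Pt n)) (hΩ : IsOpen Ω)
    (a : Fin N → MIdx n → Pt n → ℂ)
    (hfin : ∀ j, {α : MIdx n | a j α ≠ 0}.Finite)
    (hcoef : ∀ j α, ContDiffOn ℝ 1 (a j α) Ω)
    (x₀ : Pt n) (hx₀ : x₀ ∈ Ω)
    (q : Pt n) (hq : ∀ i, 0 < q i) (μ : ℝ) (hμ : 0 < μ)
    (hvan : ∀ j α, 1 < dotQ α q → ∀ x ∈ Ω, a j α x = 0)
    (ξ₀ : Pt n) (hξ₀ : ‖ξ₀‖ = 1)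
    (hzero : ∀ j, symbq (a j) q x₀ ξ₀ = 0)
    (ε : ℝ) (hε : 0 < ε)
    (hεle : ∀ β : MIdx n, dotQ β q < 1 → (∃ j, ∃ x ∈ Ω, a j β x ≠ 0) →
      ε ≤ μ * (1 - dotQ β q)) :
    ∀ δ : ℝ, 0 < δ → Metric.closedBall x₀ (2 * δ) ⊆ Ω →
      ∃ C₁ > (0:ℝ), ∀ r : ℝ, 1 ≤ r → ∀ j, ∀ x ∈ Ω, dist x x₀ < 2 * δ * r ^ (-ε / μ) →
        ‖symb (a j) x (fun i => r ^ q i * ξ₀ i)‖ ≤ C₁ * r ^ (1 - ε / μ) :=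
  statement_15_general Ω a hfin hcoef x₀ q μ hμ hvan ξ₀ hzero ε hε hεle

end MQEpaper
end
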